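/- For every natural number k ≥ 0, every decimal digit of the number (10^(k+1) + 4) · 10^(k+1) + 4 belongs to the set {0, 1, 4, 9}, i.e., every digit is itself a perfect square. -/

import Mathlib

lemma pow_digits : ∀ j : ℕ, ∀ d ∈ Nat.digits 10 (10^j), d ∈ ({0, 1, 4, 9} : Set ℕ) := by
  intro j
  induction j with
  | zero => intro d hd; simp at hd; simp [hd]
  | succ n ih =>
    rw [Nat.digits_def' (by norm_num) (by positivity)]
    intro d hd
    rcases List.mem_cons.1 hd with h | h
    · subst h; rw [pow_succ]; simp
    · apply ih
      rwa [pow_succ, Nat.mul_div_cancel _ (by norm_num)] at h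

lemma mul_pow_digits (m : ℕ) (hm : ∀ d ∈ Nat.digits 10 m, d ∈ ({0, 1, 4, 9} : Set ℕ)) :
    ∀ j : ℕ, ∀ d ∈ Nat.digits 10 (m * 10^j), d ∈ ({0, 1, 4, 9} : Set ℕ) := by
  intro j
  induction j with
  | zero => simpa using hm
  | succ n ih =>
    rcases Nat.eq_zero_or_pos m with rfl | hpos
    · simp
    rw [Nat.digits_def' (by norm_num) (by positivity)]
    intro d hd
    rcases List.mem_cons.1 hd with h | h
    · subst h; rw [pow_succ, ← mul_assoc]; simp
    · apply ih
      rwa [pow_succ, ← mul_assoc, Nat.mul_div_cancel _ (by norm_num)] at h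

theorem stmt_2 : ∀ k : ℕ, ∀ d ∈ Nat.digits 10 ((10^(k+1) + 4) * 10^(k+1) + 4),
    d ∈ ({0, 1, 4, 9} : Set ℕ) := by
  intro k
  rw [Nat.digits_def' (by norm_num) (by positivity)]
  intro d hd
  rcases List.mem_cons.1 hd with h | h
  · subst h; rw [pow_succ, ← mul_assoc]
    generalize (10 ^ k * 10 + 4) * 10 ^ k = t
    simp
  · have hdiv : ((10^(k+1) + 4) * 10^(k+1) + 4) / 10 = (10^(k+1) + 4) * 10^k := by
      rw [pow_succ, ← mul_assoc]
      omega
    rw [hdiv] at h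
    refine mul_pow_digits (10^(k+1) + 4) ?_ k d h
    rw [Nat.digits_def' (by norm_num) (by positivity)]
    intro e he
    rcases List.mem_cons.1 he with h' | h'
    · subst h'; rw [pow_succ]
      generalize 10 ^ k = t
      simp
    · apply pow_digits k
      have : (10^(k+1) + 4) / 10 = 10^k := by rw [pow_succ]; omega
      rwa [this] at h'
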